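/- For each i ∈ {1,...,n}, the vector |0...0⟩ − |1_i⟩ (where |1_i⟩ has a 1 in position i and 0 elsewhere) is orthogonal to every graph state on n vertices; consequently the span of all graph states has dimension at most 2^n − n. -/

import Mathlib

open scoped BigOperators

/-- The graph state amplitude function for edge set `E` on `n` qubits:
`|G⟩ = ∏ CZ |+⟩^⊗n`, whose amplitude on a computational basis state `x` is
`2^(-n/2)` times `(-1)` for every edge both of whose endpoints are in state `1`. -/
noncomputable def gs (n : ℕ) (E : Finset (Sym2 (Fin n))) : (Fin n → Fin 2) → ℂ :=
  fun x => ((Real.sqrt 2)⁻¹ : ℝ) ^ n *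
    ∏ e ∈ E, (if ∀ i ∈ e, x i = 1 then (-1 : ℂ) else 1)

/-- Inner product `⟨v|w⟩` on the `n`-qubit state space. -/
noncomputable def ip {n : ℕ} (v w : (Fin n → Fin 2) → ℂ) : ℂ :=
  ∑ x, (starRingEnd ℂ) (v x) * w x

/-- The edge set of the complete graph on `n` labeled vertices. -/
def completeEdges (n : ℕ) : Finset (Sym2 (Fin n)) :=
  Finset.univ.filter fun e => ¬ e.IsDiag

/-- The computational basis state `|x⟩`. -/
noncomputable def ket (n : ℕ) (x : Fin n → Fin 2) : (Fin n → Fin 2) → ℂ :=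
  fun y => if y = x then 1 else 0

/-- each vector |0...0⟩ - |1_i⟩ is orthogonal to every graph state on n
vertices, and consequently the span of all graph states has dimension at most 2^n - n. -/
lemma ip_ket {n : ℕ} (a : Fin n → Fin 2) (w : (Fin n → Fin 2) → ℂ) :
    ip (ket n a) w = w a := by
  unfold ip ket
  rw [Finset.sum_eq_single a]
  · simp
  · intro b _ hb; simp [hb]
  · simp

def e1 {n : ℕ} (i : Fin n) : Fin n → Fin 2 := fun j => if j = i then 1 else 0

lemma gs_zero {n : ℕ} (E : Finset (Sym2 (Fin n))) :
    gs n E (fun _ => 0) = ((Real.sqrt 2)⁻¹ : ℝ) ^ n := by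
  unfold gs
  rw [Finset.prod_eq_one, mul_one]
  intro e _
  induction e using Sym2.ind with
  | _ a b =>
    rw [if_neg]
    intro h
    simpa using h a (Sym2.mem_mk_left a b)

lemma gs_e1 {n : ℕ} (E : Finset (Sym2 (Fin n))) (hE : E ⊆ completeEdges n) (i : Fin n) :
    gs n E (e1 i) = ((Real.sqrt 2)⁻¹ : ℝ) ^ n := by
  unfold gs
  rw [Finset.prod_eq_one, mul_one]
  intro e he
  have hd : ¬ e.IsDiag := by
    have := hE he
    simpa [completeEdges] using this
  induction e using Sym2.ind with
  | _ a b =>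
    rw [if_neg]
    intro h
    have ha := h a (Sym2.mem_mk_left a b)
    have hb := h b (Sym2.mem_mk_right a b)
    simp only [e1] at ha hb
    have hai : a = i := by by_contra hc; simp [hc] at ha
    have hbi : b = i := by by_contra hc; simp [hc] at hb
    exact hd (by simp [hai, hbi, Sym2.isDiag_iff_proj_eq])

noncomputable def Phi (n : ℕ) : ((Fin n → Fin 2) → ℂ) →ₗ[ℂ] (Fin n → ℂ) where
  toFun w := fun i => w (e1 i) - w (fun _ => 0)
  map_add' u v := by ext i; simp [Pi.add_apply]; ring
  map_smul' c v := by ext i; simp [Pi.smul_apply, smul_eq_mul]; ring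

lemma e1_injective {n : ℕ} : Function.Injective (e1 (n := n)) := by
  intro i j h
  have := congrFun h i
  simp [e1] at this
  by_contra hc
  simp [hc] at this

lemma e1_ne_zero {n : ℕ} (i : Fin n) : e1 i ≠ (fun _ => 0) := by
  intro h
  have := congrFun h i
  simp [e1] at this

lemma Phi_surjective (n : ℕ) : Function.Surjective (Phi n) := by
  intro c
  refine ⟨fun x => ∑ j, c j * (if x = e1 j then 1 else 0), ?_⟩
  ext i
  simp only [Phi, LinearMap.coe_mk, AddHom.coe_mk]
  have h1 : (∑ j, c j * (if e1 i = e1 j then 1 else 0)) = c i := by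
    rw [Finset.sum_eq_single i]
    · simp
    · intro b _ hb
      rw [if_neg (fun h => hb (e1_injective h).symm), mul_zero]
    · simp
  have h2 : (∑ j, c j * (if (fun _ : Fin n => (0 : Fin 2)) = e1 j then 1 else 0)) = 0 := by
    apply Finset.sum_eq_zero
    intro j _
    rw [if_neg (fun h => e1_ne_zero j h.symm), mul_zero]
  rw [h1, h2, sub_zero]


theorem ortho_vectors_and_dim_bound (n : ℕ) :
    (∀ i : Fin n, ∀ E : Finset (Sym2 (Fin n)), E ⊆ completeEdges n →
      ip (ket n (fun _ => 0) - ket n (fun j => if j = i then 1 else 0)) (gs n E) = 0) ∧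
    Module.finrank ℂ
      (Submodule.span ℂ
        (Set.range fun E : {E : Finset (Sym2 (Fin n)) // E ⊆ completeEdges n} => gs n E.1))
      ≤ 2 ^ n - n := by
  have key : ∀ (E : Finset (Sym2 (Fin n))), E ⊆ completeEdges n → ∀ i : Fin n,
      gs n E (e1 i) = gs n E (fun _ => 0) := by
    intro E hE i; rw [gs_e1 E hE i, gs_zero]
  constructor
  · intro i E hE
    have hsub : ip (ket n (fun _ => 0) - ket n (e1 i)) (gs n E)
        = ip (ket n (fun _ => 0)) (gs n E) - ip (ket n (e1 i)) (gs n E) := by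
      unfold ip
      rw [← Finset.sum_sub_distrib]
      apply Finset.sum_congr rfl
      intro x _
      simp [Pi.sub_apply, map_sub, sub_mul]
    have : (fun j => if j = i then (1 : Fin 2) else 0) = e1 i := rfl
    rw [this, hsub, ip_ket, ip_ket, key E hE i, sub_self]
  · have hle : Submodule.span ℂ
        (Set.range fun E : {E : Finset (Sym2 (Fin n)) // E ⊆ completeEdges n} => gs n E.1)
        ≤ LinearMap.ker (Phi n) := by
      rw [Submodule.span_le]
      rintro _ ⟨E, rfl⟩
      simp only [SetLike.mem_coe, LinearMap.mem_ker]
      ext i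
      simp only [Phi, LinearMap.coe_mk, AddHom.coe_mk, Pi.zero_apply]
      rw [key E.1 E.2 i, sub_self]
    have hrank := LinearMap.finrank_range_add_finrank_ker (Phi n)
    have hdom : Module.finrank ℂ ((Fin n → Fin 2) → ℂ) = 2 ^ n := by
      rw [Module.finrank_pi ℂ]
      simp [Fintype.card_fun]
    have hrange : Module.finrank ℂ (LinearMap.range (Phi n)) = n := by
      rw [LinearMap.range_eq_top.mpr (Phi_surjective n), finrank_top,
        Module.finrank_pi ℂ]
      simp
    have hker : Module.finrank ℂ (LinearMap.ker (Phi n)) = 2 ^ n - n := by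
      omega
    calc Module.finrank ℂ (Submodule.span ℂ _) ≤ Module.finrank ℂ (LinearMap.ker (Phi n)) :=
          Submodule.finrank_mono hle
      _ = 2 ^ n - n := hker
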